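/- The fraction of continuous (i.e., face-connected) segments of length l of the level-L d-dimensional Morton curve is at least 1/(2^d − 1). Precisely: for d ≥ 1, L ≥ 0, and 1 ≤ l ≤ 2^{dL}, the number of integers a with 0 ≤ a ≤ 2^{dL} − l such that the set of level-L quadrants {Q : a ≤ Q ≤ a + l − 1} is face-connected is at least (2^{dL} − l + 1)/(2^d − 1). -/

import Mathlib

/-- The `r`-th coordinate (1 ≤ r ≤ d) of a level-`L` quadrant `Q` in dimension `d`. -/
def mortonCoord (d L r Q : ℕ) : ℕ :=
  ∑ ℓ ∈ Finset.range L, (Q / 2 ^ (ℓ * d + (r - 1)) % 2) * 2 ^ ℓ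

/-- Two level-`L` quadrants are face-neighbors: they differ by exactly one in exactly
one coordinate and agree in all other coordinates. -/
def MortonFaceNbr (d L Q Q' : ℕ) : Prop :=
  Q ≠ Q' ∧ ∃ r, 1 ≤ r ∧ r ≤ d ∧
    ((mortonCoord d L r Q : ℤ) - (mortonCoord d L r Q' : ℤ)).natAbs = 1 ∧
    ∀ s, 1 ≤ s → s ≤ d → s ≠ r → mortonCoord d L s Q = mortonCoord d L s Q'

/-- A set of level-`L` quadrants is face-connected: the graph on `S` whose edges join
face-neighbors is connected. -/
def MortonFaceConnected (d L : ℕ) (S : Set ℕ) : Prop :=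
  ∀ Q ∈ S, ∀ Q' ∈ S,
    Relation.ReflTransGen (fun a b => a ∈ S ∧ b ∈ S ∧ MortonFaceNbr d L a b) Q Q'

/-- `S` has at most `n` face-connected components: it can be written as a union of `n`
face-connected subsets. -/
def MortonCompBound (d L : ℕ) (S : Set ℕ) (n : ℕ) : Prop :=
  ∃ f : Fin n → Set ℕ, S = ⋃ i, f i ∧ ∀ i, MortonFaceConnected d L (f i)



namespace MortonAux

/-- digit `p` of `x` in binary -/
def dig (x p : ℕ) : ℕ := x / 2 ^ p % 2

lemma dig_le_one (x p : ℕ) : dig x p ≤ 1 := by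
  have := Nat.mod_lt (x / 2 ^ p) (show 0 < 2 by norm_num)
  unfold dig; omega

lemma dig_eq_zero_of_lt {x : ℕ} {p : ℕ} (h : x < 2 ^ p) : dig x p = 0 := by
  unfold dig
  rw [Nat.div_eq_of_lt h]

lemma dig_zero (p : ℕ) : dig 0 p = 0 := by simp [dig]

/-- digits below `b` don't change when adding a multiple of `2^b`. -/
lemma dig_add_mul_pow {x : ℕ} (c b p : ℕ) (hp : p < b) :
    dig (x + c * 2 ^ b) p = dig x p := by
  have h1 : c * 2 ^ b = c * 2 ^ (b - p - 1) * 2 * 2 ^ p := by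
    rw [mul_assoc, mul_assoc, ← pow_succ']
    congr 2
    rw [← pow_add]
    congr 1
    omega
  unfold dig
  rw [h1, Nat.add_mul_div_right _ _ (Nat.pow_pos (n := p) (by norm_num))]
  omega

lemma mod_pow_succ (x b : ℕ) : x % 2 ^ (b + 1) = x % 2 ^ b + dig x b * 2 ^ b := by
  have h1 : x % 2 ^ (b+1) = x % 2 ^ b + 2 ^ b * ((x / 2^b) % 2) := by
    rw [pow_succ, Nat.mod_mul]
  rw [h1]; unfold dig; ring

/-- binary expansion of `x % 2^b` -/
lemma sum_dig (b x : ℕ) : ∑ j ∈ Finset.range b, dig x j * 2 ^ j = x % 2 ^ b := by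
  induction b with
  | zero => simp [Nat.mod_one]
  | succ b ih => rw [Finset.sum_range_succ, ih, mod_pow_succ]

lemma sum_dig_of_lt {b x : ℕ} (h : x < 2 ^ b) :
    ∑ j ∈ Finset.range b, dig x j * 2 ^ j = x := by
  rw [sum_dig, Nat.mod_eq_of_lt h]

/-- master lemma: a number built from digits `f j ≤ 1` has exactly those digits. -/
lemma master (b : ℕ) (f : ℕ → ℕ) (hf : ∀ j, f j ≤ 1) :
    (∑ j ∈ Finset.range b, f j * 2 ^ j) < 2 ^ b ∧
      ∀ p, dig (∑ j ∈ Finset.range b, f j * 2 ^ j) p = if p < b then f p else 0 := by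
  induction b with
  | zero => simp [dig]
  | succ b ih =>
    obtain ⟨ihv, ihd⟩ := ih
    rw [Finset.sum_range_succ]
    constructor
    · have : f b * 2 ^ b ≤ 2 ^ b := by
        have := hf b; nlinarith [Nat.pow_pos (n := b) (show 0 < 2 by norm_num)]
      have : (∑ j ∈ Finset.range b, f j * 2 ^ j) + f b * 2 ^ b < 2 ^ b + 2 ^ b := by omega
      calc _ < 2 ^ b + 2 ^ b := this
        _ = 2 ^ (b+1) := by ring
    · intro p
      rcases lt_trichotomy p b with hp | hp | hp
      · rw [dig_add_mul_pow _ _ _ hp, ihd p, if_pos hp, if_pos (by omega)]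
      · subst hp
        rw [if_pos (by omega)]
        unfold dig
        rw [Nat.add_mul_div_right _ _ (Nat.pow_pos (n := p) (by norm_num)),
          Nat.div_eq_of_lt ihv]
        simp [Nat.mod_eq_of_lt (by have := hf p; omega : f p < 2)]
      · rw [if_neg (by omega)]
        apply dig_eq_zero_of_lt
        have h1 : (∑ j ∈ Finset.range b, f j * 2 ^ j) + f b * 2 ^ b < 2 ^ (b+1) := by
          have : f b * 2 ^ b ≤ 2 ^ b := by
            have := hf b; nlinarith [Nat.pow_pos (n := b) (show 0 < 2 by norm_num)]
          have : (2:ℕ) ^ (b+1) = 2 ^ b + 2 ^ b := by ring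
          omega
        calc _ < 2 ^ (b+1) := h1
          _ ≤ 2 ^ p := Nat.pow_le_pow_right (by norm_num) (by omega)

end MortonAux
namespace MortonAux

/-- axis mask: bits at positions `j < b` with `j ≡ b [MOD d]` -/
def Ob (d b : ℕ) : ℕ := ∑ j ∈ Finset.range b, (if j % d = b % d then 1 else 0) * 2 ^ j

/-- complement mask within `2^b - 1` -/
def Cb (d b : ℕ) : ℕ := ∑ j ∈ Finset.range b, (if j % d = b % d then 0 else 1) * 2 ^ j

/-- the non-axis part of `α`'s digits -/
def vA (d b α : ℕ) : ℕ :=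
  ∑ j ∈ Finset.range b, (if j % d = b % d then 0 else dig α j) * 2 ^ j

lemma hf_Ob (d b : ℕ) : ∀ j : ℕ, (if j % d = b % d then 1 else 0) ≤ 1 := by
  intro j; split <;> omega

lemma hf_Cb (d b : ℕ) : ∀ j : ℕ, (if j % d = b % d then 0 else 1) ≤ 1 := by
  intro j; split <;> omega

lemma hf_vA (d b α : ℕ) : ∀ j : ℕ, (if j % d = b % d then 0 else dig α j) ≤ 1 := by
  intro j
  split
  · omega
  · exact dig_le_one _ _

lemma Ob_lt (d b : ℕ) : Ob d b < 2 ^ b := (master b _ (hf_Ob d b)).1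

lemma dig_Ob (d b p : ℕ) :
    dig (Ob d b) p = if p < b ∧ p % d = b % d then 1 else 0 := by
  unfold Ob
  rw [(master b _ (hf_Ob d b)).2 p]
  by_cases h1 : p < b <;> by_cases h2 : p % d = b % d <;> simp [h1, h2]

lemma Cb_lt (d b : ℕ) : Cb d b < 2 ^ b := (master b _ (hf_Cb d b)).1

lemma dig_Cb (d b p : ℕ) :
    dig (Cb d b) p = if p < b ∧ ¬ p % d = b % d then 1 else 0 := by
  unfold Cb
  rw [(master b _ (hf_Cb d b)).2 p]
  by_cases h1 : p < b <;> by_cases h2 : p % d = b % d <;> simp [h1, h2]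

lemma vA_lt (d b α : ℕ) : vA d b α < 2 ^ b := (master b _ (hf_vA d b α)).1

lemma dig_vA (d b α p : ℕ) :
    dig (vA d b α) p = if p < b ∧ ¬ p % d = b % d then dig α p else 0 := by
  unfold vA
  rw [(master b _ (hf_vA d b α)).2 p]
  by_cases h1 : p < b <;> by_cases h2 : p % d = b % d <;> simp [h1, h2]

lemma sum_two_pow (b : ℕ) : ∑ j ∈ Finset.range b, 2 ^ j = 2 ^ b - 1 := by
  induction b with
  | zero => simp
  | succ b ih => rw [Finset.sum_range_succ, ih]; have := Nat.one_le_two_pow (n := b); omega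

lemma Ob_add_Cb (d b : ℕ) : Ob d b + Cb d b = 2 ^ b - 1 := by
  unfold Ob Cb
  rw [← Finset.sum_add_distrib]
  have h1 : ∀ j ∈ Finset.range b,
      ((if j % d = b % d then 1 else 0) * 2 ^ j + (if j % d = b % d then 0 else 1) * 2 ^ j)
        = 2 ^ j := by
    intro j _; split <;> ring
  rw [Finset.sum_congr rfl h1, sum_two_pow]

lemma vA_le (d b α : ℕ) : vA d b α ≤ α := by
  have h1 : vA d b α ≤ ∑ j ∈ Finset.range b, dig α j * 2 ^ j := by
    apply Finset.sum_le_sum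
    intro j _
    have := dig_le_one α j
    split <;> simp
  calc vA d b α ≤ _ := h1
    _ = α % 2 ^ b := sum_dig b α
    _ ≤ α := Nat.mod_le _ _

lemma le_vA_add_Ob (d b α : ℕ) (h : α < 2 ^ b) : α ≤ vA d b α + Ob d b := by
  have h1 : α = ∑ j ∈ Finset.range b, dig α j * 2 ^ j := (sum_dig_of_lt h).symm
  have h2 : ∀ j ∈ Finset.range b, dig α j * 2 ^ j =
      (if j % d = b % d then 0 else dig α j) * 2 ^ j
      + (if j % d = b % d then dig α j else 0) * 2 ^ j := by
    intro j _; split <;> ring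
  have e1 : ∑ j ∈ Finset.range b, dig α j * 2 ^ j
      = vA d b α + ∑ j ∈ Finset.range b, (if j % d = b % d then dig α j else 0) * 2 ^ j := by
    rw [Finset.sum_congr rfl h2, Finset.sum_add_distrib]
    rfl
  have h4 : ∑ j ∈ Finset.range b, (if j % d = b % d then dig α j else 0) * 2 ^ j ≤ Ob d b := by
    apply Finset.sum_le_sum
    intro j _
    have := dig_le_one α j
    split <;> simp <;> omega
  omega

/-- `(2^d - 1) * Ob d b = 2^b - 2^(b % d)` -/
lemma Ob_identity (d b : ℕ) (hd : 1 ≤ d) : (2 ^ d - 1) * Ob d b = 2 ^ b - 2 ^ (b % d) := by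
  unfold Ob
  have hsplit : ∀ j ∈ Finset.range b,
      (if j % d = b % d then 1 else 0) * 2 ^ j = if j % d = b % d then 2 ^ j else 0 := by
    intro j _; split <;> ring
  have hreindex : ∑ j ∈ Finset.range b, (if j % d = b % d then 1 else 0) * 2 ^ j
      = ∑ i ∈ Finset.range (b / d), 2 ^ (i * d + b % d) := by
    rw [Finset.sum_congr rfl hsplit, ← Finset.sum_filter]
    apply Finset.sum_nbij' (fun j => j / d) (fun i => i * d + b % d)
    · intro j hj
      simp only [Finset.mem_filter, Finset.mem_range] at hj ⊢
      obtain ⟨hjb, hjd⟩ := hj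
      have hj2 : d * (j / d) + j % d = j := Nat.div_add_mod j d
      have hb : d * (b / d) + b % d = b := Nat.div_add_mod b d
      by_contra hcon
      push_neg at hcon
      have h8 : b / d ≤ j / d := hcon
      have h9 : d * (b / d) ≤ d * (j / d) := Nat.mul_le_mul_left d h8
      omega
    · intro i hi
      simp only [Finset.mem_range, Finset.mem_filter] at hi ⊢
      have hb : d * (b / d) + b % d = b := Nat.div_add_mod b d
      constructor
      · have h9 : i + 1 ≤ b / d := hi
        have h10 : d * (i + 1) ≤ d * (b / d) := Nat.mul_le_mul_left d h9
        have : i * d + d = d * (i+1) := by ring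
        omega
      · rw [show i * d + b % d = d * i + b % d by ring, Nat.mul_add_mod]
        exact Nat.mod_eq_of_lt (Nat.mod_lt b (by omega))
    · intro j hj
      simp only [Finset.mem_filter, Finset.mem_range] at hj
      have hj2 : d * (j / d) + j % d = j := Nat.div_add_mod j d
      have : j / d * d = d * (j / d) := Nat.mul_comm _ _
      omega
    · intro i hi
      simp only [Finset.mem_range] at hi
      rw [show i * d + b % d = b % d + d * i by ring,
        Nat.add_mul_div_left _ _ (show 0 < d by omega),
        Nat.div_eq_of_lt (Nat.mod_lt b (show 0 < d by omega))]
      omega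
    · intro j hj
      simp only [Finset.mem_filter, Finset.mem_range] at hj
      congr 1
      have hj2 : d * (j / d) + j % d = j := Nat.div_add_mod j d
      have : j / d * d = d * (j / d) := Nat.mul_comm _ _
      omega
  rw [hreindex, Finset.mul_sum]
  have h7 : ∀ i ∈ Finset.range (b / d), (2 ^ d - 1) * 2 ^ (i * d + b % d)
      = 2 ^ ((i+1) * d + b % d) - 2 ^ (i * d + b % d) := by
    intro i _
    have h2 : (2:ℕ) ^ ((i+1) * d + b % d) = 2 ^ d * 2 ^ (i * d + b % d) := by
      rw [← pow_add]; ring_nf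
    have h3 : (1:ℕ) ≤ 2 ^ d := Nat.one_le_two_pow
    rw [h2, Nat.sub_mul, one_mul]
  rw [Finset.sum_congr rfl h7]
  have htel : ∀ n : ℕ, ∑ i ∈ Finset.range n, (2 ^ ((i+1) * d + b % d) - 2 ^ (i * d + b % d))
      = 2 ^ (n * d + b % d) - 2 ^ (b % d) := by
    intro n
    induction n with
    | zero => simp
    | succ n ih =>
      rw [Finset.sum_range_succ, ih]
      have h5 : (2:ℕ) ^ (b % d) ≤ 2 ^ (n * d + b % d) :=
        Nat.pow_le_pow_right (by norm_num) (by omega)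
      have h6 : (2:ℕ) ^ (n * d + b % d) ≤ 2 ^ ((n+1) * d + b % d) :=
        Nat.pow_le_pow_right (by norm_num) (by nlinarith)
      omega
  rw [htel]
  congr 1
  conv_rhs => rw [← Nat.div_add_mod b d]
  ring_nf

end MortonAux
namespace MortonAux

lemma mortonCoord_eq (d L r Q : ℕ) :
    mortonCoord d L r Q = ∑ ℓ ∈ Finset.range L, dig Q (ℓ * d + (r - 1)) * 2 ^ ℓ := rfl

lemma dig_block {y : ℕ} (m b p : ℕ) (hy : y < 2 ^ (b+1)) :
    dig (m * 2 ^ (b+1) + y) p = if p ≤ b then dig y p else dig m (p - (b+1)) := by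
  split
  · next hp =>
    have h1 : m * 2 ^ (b+1) + y = y + (m * 2 ^ (b - p) * 2) * 2 ^ p := by
      have h2 : (2:ℕ) ^ (b+1) = 2 ^ (b-p) * 2 * 2 ^ p := by
        rw [show (2:ℕ) ^ (b-p) * 2 * 2 ^ p = 2 ^ ((b-p) + 1 + p) from by
          rw [pow_add, pow_add, pow_one], show (b-p) + 1 + p = b + 1 from by omega]
      rw [h2]; ring
    unfold dig
    rw [h1, Nat.add_mul_div_right _ _ (Nat.pow_pos (n := p) (by norm_num))]
    omega
  · next hp =>
    have hp' : b + 1 ≤ p := by omega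
    unfold dig
    have h2 : (2:ℕ) ^ p = 2 ^ (b+1) * 2 ^ (p - (b+1)) := by
      rw [← pow_add]; congr 1; omega
    rw [h2, ← Nat.div_div_eq_div_mul]
    have h3 : (m * 2 ^ (b+1) + y) / 2 ^ (b+1) = m := by
      rw [add_comm, Nat.add_mul_div_right _ _ (Nat.pow_pos (n := (b+1)) (by norm_num)),
        Nat.div_eq_of_lt hy]
      omega
    rw [h3]

/-- The key face-neighbor lemma: `m·2^(b+1) + (v + Ob)` and `m·2^(b+1) + 2^b + v`
are face neighbors along axis `b % d + 1`. -/
lemma nbr {d L : ℕ} (b m v : ℕ) (hd : 1 ≤ d) (hb : b < d * L)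
    (hv : ∀ p, p % d = b % d → dig v p = 0) (hvb : v < 2 ^ b) :
    MortonFaceNbr d L (m * 2 ^ (b+1) + (v + Ob d b)) (m * 2 ^ (b+1) + 2 ^ b + v) := by
  set σ := b % d with hσ
  set q := b / d with hq
  have hσd : σ < d := Nat.mod_lt b (by omega)
  have hbqσ : b = q * d + σ := by
    have h1 : d * q + σ = b := by rw [hq, hσ]; exact Nat.div_add_mod b d
    have hcomm : q * d = d * q := Nat.mul_comm _ _
    omega
  have hqL : q < L := by
    by_contra hcon
    push_neg at hcon
    have h1 : d * L ≤ d * q := Nat.mul_le_mul_left d hcon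
    have h2 : q * d = d * q := Nat.mul_comm _ _
    omega
  -- digits of y₁ = v + Ob
  have hf₁ : ∀ j : ℕ, (dig v j + if j % d = σ then 1 else 0) ≤ 1 := by
    intro j
    by_cases hj : j % d = σ
    · rw [hv j hj, if_pos hj]
    · rw [if_neg hj]
      have := dig_le_one v j
      omega
  have hy₁val : v + Ob d b = ∑ j ∈ Finset.range b, (dig v j + if j % d = σ then 1 else 0) * 2 ^ j := by
    have h1 : ∀ j ∈ Finset.range b, (dig v j + if j % d = σ then 1 else 0) * 2 ^ j
        = dig v j * 2 ^ j + (if j % d = σ then 1 else 0) * 2 ^ j := by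
      intro j _; ring
    rw [Finset.sum_congr rfl h1, Finset.sum_add_distrib, sum_dig_of_lt hvb]
    rfl
  have hy₁ := master b _ hf₁
  have hy₁lt : v + Ob d b < 2 ^ b := by rw [hy₁val]; exact hy₁.1
  have hdigy₁ : ∀ p, dig (v + Ob d b) p
      = if p < b then (dig v p + if p % d = σ then 1 else 0) else 0 := by
    intro p; rw [hy₁val]; exact hy₁.2 p
  -- digits of y₂ = 2^b + v
  have hf₂ : ∀ j : ℕ, (if j = b then 1 else dig v j) ≤ 1 := by
    intro j; split
    · omega
    · exact dig_le_one v j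
  have hy₂val : 2 ^ b + v = ∑ j ∈ Finset.range (b+1), (if j = b then 1 else dig v j) * 2 ^ j := by
    rw [Finset.sum_range_succ, if_pos rfl, one_mul]
    have h1 : ∀ j ∈ Finset.range b, (if j = b then 1 else dig v j) * 2 ^ j = dig v j * 2 ^ j := by
      intro j hj
      simp only [Finset.mem_range] at hj
      rw [if_neg (by omega)]
    rw [Finset.sum_congr rfl h1, sum_dig_of_lt hvb, add_comm]
  have hy₂ := master (b+1) _ hf₂
  have hy₂lt : 2 ^ b + v < 2 ^ (b+1) := by rw [hy₂val]; exact hy₂.1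
  have hdigy₂ : ∀ p, dig (2 ^ b + v) p
      = if p < b + 1 then (if p = b then 1 else dig v p) else 0 := by
    intro p; rw [hy₂val]; exact hy₂.2 p
  set Q := m * 2 ^ (b+1) + (v + Ob d b) with hQ
  set Q' := m * 2 ^ (b+1) + 2 ^ b + v with hQ'
  have hQ'2 : Q' = m * 2 ^ (b+1) + (2 ^ b + v) := by rw [hQ']; ring
  have hdigQ : ∀ p, dig Q p = if p ≤ b then dig (v + Ob d b) p else dig m (p - (b+1)) :=
    fun p => dig_block m b p (by have := Nat.pow_lt_pow_right (show 1 < 2 by norm_num) (show b < b + 1 by omega); omega)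
  have hdigQ' : ∀ p, dig Q' p = if p ≤ b then dig (2 ^ b + v) p else dig m (p - (b+1)) := by
    intro p; rw [hQ'2]; exact dig_block m b p hy₂lt
  -- helper to split sums at q
  have hsplit : ∀ g : ℕ → ℕ, ∑ ℓ ∈ Finset.range L, g ℓ
      = (∑ ℓ ∈ Finset.range q, g ℓ) + g q + ∑ ℓ ∈ Finset.Ico (q+1) L, g ℓ := by
    intro g
    rw [Finset.range_eq_Ico, ← Finset.sum_Ico_consecutive _ (Nat.zero_le (q+1)) (by omega : q+1 ≤ L),
      ← Finset.range_eq_Ico, Finset.sum_range_succ]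
  -- the main coordinate
  have hcoordr : mortonCoord d L (σ+1) Q' = mortonCoord d L (σ+1) Q + 1 := by
    rw [mortonCoord_eq, mortonCoord_eq]
    simp only [Nat.add_sub_cancel]
    rw [hsplit (fun ℓ => dig Q' (ℓ * d + σ) * 2 ^ ℓ), hsplit (fun ℓ => dig Q (ℓ * d + σ) * 2 ^ ℓ)]
    have hplt : ∀ ℓ, ℓ < q → ℓ * d + σ < b := by
      intro ℓ hℓ
      have : ℓ * d + d ≤ q * d := by
        have : (ℓ+1) * d ≤ q * d := Nat.mul_le_mul_right d hℓ
        nlinarith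
      omega
    have hpmod : ∀ ℓ : ℕ, (ℓ * d + σ) % d = σ := by
      intro ℓ
      rw [show ℓ * d + σ = d * ℓ + σ by ring, Nat.mul_add_mod]
      exact Nat.mod_eq_of_lt hσd
    have h1 : ∑ ℓ ∈ Finset.range q, dig Q (ℓ * d + σ) * 2 ^ ℓ = 2 ^ q - 1 := by
      rw [← sum_two_pow q]
      apply Finset.sum_congr rfl
      intro ℓ hℓ
      simp only [Finset.mem_range] at hℓ
      rw [hdigQ, if_pos (by have := hplt ℓ hℓ; omega), hdigy₁,
        if_pos (hplt ℓ hℓ), hv _ (by rw [hpmod]), if_pos (hpmod ℓ)]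
      ring
    have h1' : ∑ ℓ ∈ Finset.range q, dig Q' (ℓ * d + σ) * 2 ^ ℓ = 0 := by
      apply Finset.sum_eq_zero
      intro ℓ hℓ
      simp only [Finset.mem_range] at hℓ
      rw [hdigQ', if_pos (by have := hplt ℓ hℓ; omega), hdigy₂,
        if_pos (by have := hplt ℓ hℓ; omega), if_neg (by have := hplt ℓ hℓ; omega),
        hv _ (by rw [hpmod])]
      ring
    have h2 : dig Q (q * d + σ) * 2 ^ q = 0 := by
      rw [← hbqσ, hdigQ, if_pos (le_refl b), hdigy₁, if_neg (by omega)]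
      ring
    have h2' : dig Q' (q * d + σ) * 2 ^ q = 2 ^ q := by
      rw [← hbqσ, hdigQ', if_pos (le_refl b), hdigy₂, if_pos (by omega), if_pos rfl, one_mul]
    have h3 : ∑ ℓ ∈ Finset.Ico (q+1) L, dig Q (ℓ * d + σ) * 2 ^ ℓ
        = ∑ ℓ ∈ Finset.Ico (q+1) L, dig Q' (ℓ * d + σ) * 2 ^ ℓ := by
      apply Finset.sum_congr rfl
      intro ℓ hℓ
      simp only [Finset.mem_Ico] at hℓ
      have hpgt : b < ℓ * d + σ := by
        have : (q+1) * d ≤ ℓ * d := Nat.mul_le_mul_right d hℓ.1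
        nlinarith
      rw [hdigQ, if_neg (by omega), hdigQ', if_neg (by omega)]
    rw [h1, h1', h2, h2', h3]
    have : (1:ℕ) ≤ 2 ^ q := Nat.one_le_two_pow
    omega
  have hcoords : ∀ s, 1 ≤ s → s ≤ d → s ≠ σ + 1 →
      mortonCoord d L s Q = mortonCoord d L s Q' := by
    intro s hs1 hs2 hs3
    rw [mortonCoord_eq, mortonCoord_eq]
    apply Finset.sum_congr rfl
    intro ℓ _
    congr 1
    have hτd : s - 1 < d := by omega
    have hpmod : (ℓ * d + (s-1)) % d = s - 1 := by
      rw [show ℓ * d + (s-1) = d * ℓ + (s-1) by ring, Nat.mul_add_mod]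
      exact Nat.mod_eq_of_lt hτd
    have hτσ : s - 1 ≠ σ := by omega
    have hpb : ℓ * d + (s-1) ≠ b := by
      intro hcon
      have : b % d = s - 1 := by rw [← hcon]; exact hpmod
      omega
    rcases le_or_gt (ℓ * d + (s-1)) b with hple | hpgt
    · have hplt : ℓ * d + (s-1) < b := by omega
      have e1 : dig Q (ℓ * d + (s-1)) = dig v (ℓ * d + (s-1)) := by
        rw [hdigQ, if_pos hple, hdigy₁, if_pos hplt,
          if_neg (show ¬ (ℓ * d + (s-1)) % d = σ from by rw [hpmod]; exact hτσ)]
        omega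
      have e2 : dig Q' (ℓ * d + (s-1)) = dig v (ℓ * d + (s-1)) := by
        rw [hdigQ', if_pos hple, hdigy₂, if_pos (show ℓ * d + (s-1) < b + 1 from by omega),
          if_neg hpb]
      rw [e1, e2]
    · rw [hdigQ, if_neg (by omega), hdigQ', if_neg (by omega)]
  refine ⟨?_, σ + 1, by omega, by omega, ?_, ?_⟩
  · have hOb := Ob_lt d b
    omega
  · rw [hcoordr]
    have : ((mortonCoord d L (σ+1) Q : ℤ) - ((mortonCoord d L (σ+1) Q + 1 : ℕ) : ℤ)) = -1 := by
      push_cast; ring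
    rw [this]
    rfl
  · exact hcoords

lemma nbr_symm {d L Q Q' : ℕ} (h : MortonFaceNbr d L Q Q') : MortonFaceNbr d L Q' Q := by
  obtain ⟨hne, r, hr1, hr2, habs, hs⟩ := h
  refine ⟨hne.symm, r, hr1, hr2, ?_, fun s h1 h2 h3 => (hs s h1 h2 h3).symm⟩
  rw [← habs, ← Int.natAbs_neg]
  congr 1
  ring

end MortonAux
namespace MortonAux

/-- connectivity of `X` within ambient set `S` -/
def CW (d L : ℕ) (S X : Set ℕ) : Prop :=
  ∀ x ∈ X, ∀ y ∈ X,
    Relation.ReflTransGen (fun a b => a ∈ S ∧ b ∈ S ∧ MortonFaceNbr d L a b) x y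

lemma CW.mono {d L : ℕ} {S T X : Set ℕ} (hST : S ⊆ T) (h : CW d L S X) : CW d L T X :=
  fun x hx y hy => Relation.ReflTransGen.mono (fun a b hab => ⟨hST hab.1, hST hab.2.1, hab.2.2⟩) _ _ (h x hx y hy)

lemma CW.union {d L : ℕ} {S A B : Set ℕ} (hA : CW d L S A) (hB : CW d L S B)
    {a b : ℕ} (ha : a ∈ A) (hb : b ∈ B) (haS : a ∈ S) (hbS : b ∈ S)
    (hn : MortonFaceNbr d L a b) : CW d L S (A ∪ B) := by
  have edge : Relation.ReflTransGen
      (fun a b => a ∈ S ∧ b ∈ S ∧ MortonFaceNbr d L a b) a b :=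
    Relation.ReflTransGen.single ⟨haS, hbS, hn⟩
  have edge' : Relation.ReflTransGen
      (fun a b => a ∈ S ∧ b ∈ S ∧ MortonFaceNbr d L a b) b a :=
    Relation.ReflTransGen.single ⟨hbS, haS, nbr_symm hn⟩
  rintro x (hx | hx) y (hy | hy)
  · exact hA x hx y hy
  · exact ((hA x hx a ha).trans edge).trans (hB b hb y hy)
  · exact ((hB x hx b hb).trans edge').trans (hA a ha y hy)
  · exact hB x hx y hy

lemma two_pow_succ (b : ℕ) : (2:ℕ) ^ (b+1) = 2 ^ b + 2 ^ b := by ring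

/-- prefixes of `2^b`-aligned blocks are face-connected -/
lemma pre_conn (d L : ℕ) (hd : 1 ≤ d) :
    ∀ b, b ≤ d * L → ∀ u x, x < 2 ^ b →
      CW d L (Set.Icc (u * 2 ^ b) (u * 2 ^ b + x)) (Set.Icc (u * 2 ^ b) (u * 2 ^ b + x)) := by
  intro b
  induction b with
  | zero =>
    intro _ u x hx
    interval_cases x
    intro a ha y hy
    simp only [Set.mem_Icc] at ha hy
    have : a = y := by omega
    subst this
    exact Relation.ReflTransGen.refl
  | succ b ih =>
    intro hble u x hx
    have hpow : (2:ℕ) ^ (b+1) = 2 ^ b + 2 ^ b := two_pow_succ b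
    have h2u : 2 * u * 2 ^ b = u * 2 ^ (b+1) := by rw [hpow]; ring
    have h2u1 : (2 * u + 1) * 2 ^ b = u * 2 ^ (b+1) + 2 ^ b := by rw [hpow]; ring
    have h1 : (1:ℕ) ≤ 2 ^ b := Nat.one_le_two_pow
    by_cases hx2 : x < 2 ^ b
    · have := ih (by omega) (2 * u) x hx2
      rwa [h2u] at this
    · -- x ≥ 2^b : lower full block ∪ upper prefix
      push_neg at hx2
      have hA := ih (by omega) (2 * u) (2 ^ b - 1) (by omega)
      have hB := ih (by omega) (2 * u + 1) (x - 2 ^ b) (by omega)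
      rw [h2u] at hA
      rw [h2u1] at hB
      have hBtop : u * 2 ^ (b+1) + 2 ^ b + (x - 2 ^ b) = u * 2 ^ (b+1) + x := by omega
      rw [hBtop] at hB
      set S := Set.Icc (u * 2 ^ (b+1)) (u * 2 ^ (b+1) + x) with hS
      have hedge := nbr (d := d) (L := L) b u 0 hd (by omega) (fun p _ => dig_zero p)
        (by omega)
      rw [zero_add, add_zero] at hedge
      have hOb := Ob_lt d b
      have hunion : S = Set.Icc (u * 2 ^ (b+1)) (u * 2 ^ (b+1) + (2 ^ b - 1))
          ∪ Set.Icc (u * 2 ^ (b+1) + 2 ^ b) (u * 2 ^ (b+1) + x) := by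
        ext n
        simp only [Set.mem_Icc, Set.mem_union, hS]
        omega
      have hres := CW.union (d := d) (L := L) (S := S)
        (hA.mono (by rw [hS]; intro n hn; simp only [Set.mem_Icc] at *; omega))
        (hB.mono (by rw [hS]; intro n hn; simp only [Set.mem_Icc] at *; omega))
        (a := u * 2 ^ (b+1) + Ob d b) (b := u * 2 ^ (b+1) + 2 ^ b)
        (by simp only [Set.mem_Icc]; omega)
        (by simp only [Set.mem_Icc]; omega)
        (by rw [hS]; simp only [Set.mem_Icc]; omega)
        (by rw [hS]; simp only [Set.mem_Icc]; omega)
        hedge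
      rwa [← hunion] at hres

/-- suffixes of `2^b`-aligned blocks are face-connected -/
lemma suf_conn (d L : ℕ) (hd : 1 ≤ d) :
    ∀ b, b ≤ d * L → ∀ u α, α < 2 ^ b →
      CW d L (Set.Icc (u * 2 ^ b + α) (u * 2 ^ b + (2 ^ b - 1)))
        (Set.Icc (u * 2 ^ b + α) (u * 2 ^ b + (2 ^ b - 1))) := by
  intro b
  induction b with
  | zero =>
    intro _ u α hα
    interval_cases α
    intro a ha y hy
    simp only [Set.mem_Icc] at ha hy
    have : a = y := by omega
    subst this
    exact Relation.ReflTransGen.refl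
  | succ b ih =>
    intro hble u α hα
    have hpow : (2:ℕ) ^ (b+1) = 2 ^ b + 2 ^ b := two_pow_succ b
    have h2u : 2 * u * 2 ^ b = u * 2 ^ (b+1) := by rw [hpow]; ring
    have h2u1 : (2 * u + 1) * 2 ^ b = u * 2 ^ (b+1) + 2 ^ b := by rw [hpow]; ring
    have h1 : (1:ℕ) ≤ 2 ^ b := Nat.one_le_two_pow
    by_cases hα2 : 2 ^ b ≤ α
    · have := ih (by omega) (2 * u + 1) (α - 2 ^ b) (by omega)
      rw [h2u1] at this
      have e1 : u * 2 ^ (b+1) + 2 ^ b + (α - 2 ^ b) = u * 2 ^ (b+1) + α := by omega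
      have e2 : u * 2 ^ (b+1) + 2 ^ b + (2 ^ b - 1) = u * 2 ^ (b+1) + (2 ^ (b+1) - 1) := by
        omega
      rwa [e1, e2] at this
    · push_neg at hα2
      have hA := ih (by omega) (2 * u) α hα2
      have hB := ih (by omega) (2 * u + 1) 0 (by omega)
      rw [h2u] at hA
      rw [h2u1, add_zero] at hB
      have hBtop : u * 2 ^ (b+1) + 2 ^ b + (2 ^ b - 1) = u * 2 ^ (b+1) + (2 ^ (b+1) - 1) := by
        omega
      rw [hBtop] at hB
      set S := Set.Icc (u * 2 ^ (b+1) + α) (u * 2 ^ (b+1) + (2 ^ (b+1) - 1)) with hS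
      have hCb := Cb_lt d b
      have hObCb := Ob_add_Cb d b
      have hedge := nbr (d := d) (L := L) b u (Cb d b) hd (by omega)
        (fun p hp => by rw [dig_Cb, if_neg (by simp [hp])]) hCb
      have hQ1 : Cb d b + Ob d b = 2 ^ b - 1 := by omega
      rw [hQ1] at hedge
      have hunion : S = Set.Icc (u * 2 ^ (b+1) + α) (u * 2 ^ (b+1) + (2 ^ b - 1))
          ∪ Set.Icc (u * 2 ^ (b+1) + 2 ^ b) (u * 2 ^ (b+1) + (2 ^ (b+1) - 1)) := by
        ext n
        simp only [Set.mem_Icc, Set.mem_union, hS]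
        omega
      have hres := CW.union (d := d) (L := L) (S := S)
        (hA.mono (by rw [hS]; intro n hn; simp only [Set.mem_Icc] at *; omega))
        (hB.mono (by rw [hS]; intro n hn; simp only [Set.mem_Icc] at *; omega))
        (a := u * 2 ^ (b+1) + (2 ^ b - 1)) (b := u * 2 ^ (b+1) + 2 ^ b + Cb d b)
        (by simp only [Set.mem_Icc]; omega)
        (by simp only [Set.mem_Icc]; omega)
        (by rw [hS]; simp only [Set.mem_Icc]; omega)
        (by rw [hS]; simp only [Set.mem_Icc]; omega)
        hedge
      rwa [← hunion] at hres

lemma v_le_Cb {d b v : ℕ} (hv : ∀ p, p % d = b % d → dig v p = 0) (hvb : v < 2 ^ b) :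
    v ≤ Cb d b := by
  conv_lhs => rw [← sum_dig_of_lt hvb]
  unfold Cb
  apply Finset.sum_le_sum
  intro j _
  by_cases hj : j % d = b % d
  · rw [hv j hj, if_pos hj]
  · rw [if_neg hj]
    have := dig_le_one v j
    apply Nat.mul_le_mul_right
    omega

/-- a segment inside an aligned `2^(b+1)` block, crossing its midpoint, with a
    cross-edge witness `v`, is face-connected. -/
lemma cross_conn {d L : ℕ} (b u α l' v : ℕ) (hd : 1 ≤ d) (hb : b < d * L)
    (hα : α < 2 ^ b) (hfit : α + l' ≤ 2 ^ (b+1)) (hcross : 2 ^ b < α + l')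
    (hv : ∀ p, p % d = b % d → dig v p = 0) (hvb : v < 2 ^ b)
    (hwl : α ≤ v + Ob d b) (hwr : 2 ^ b + v + 1 ≤ α + l') :
    MortonFaceConnected d L (Set.Icc (u * 2 ^ (b+1) + α) (u * 2 ^ (b+1) + α + l' - 1)) := by
  have hpow : (2:ℕ) ^ (b+1) = 2 ^ b + 2 ^ b := two_pow_succ b
  have h2u : 2 * u * 2 ^ b = u * 2 ^ (b+1) := by rw [hpow]; ring
  have h2u1 : (2 * u + 1) * 2 ^ b = u * 2 ^ (b+1) + 2 ^ b := by rw [hpow]; ring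
  have h1 : (1:ℕ) ≤ 2 ^ b := Nat.one_le_two_pow
  have hvCb := v_le_Cb hv hvb
  have hObCb := Ob_add_Cb d b
  have hOb := Ob_lt d b
  have hA := suf_conn d L hd b (by omega) (2 * u) α hα
  have hB := pre_conn d L hd b (by omega) (2 * u + 1) (α + l' - 1 - 2 ^ b) (by omega)
  rw [h2u] at hA
  rw [h2u1] at hB
  have hBtop : u * 2 ^ (b+1) + 2 ^ b + (α + l' - 1 - 2 ^ b) = u * 2 ^ (b+1) + α + l' - 1 := by
    omega
  rw [hBtop] at hB
  set S := Set.Icc (u * 2 ^ (b+1) + α) (u * 2 ^ (b+1) + α + l' - 1) with hS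
  have hedge := nbr (d := d) (L := L) b u v hd hb hv hvb
  have hunion : S = Set.Icc (u * 2 ^ (b+1) + α) (u * 2 ^ (b+1) + (2 ^ b - 1))
      ∪ Set.Icc (u * 2 ^ (b+1) + 2 ^ b) (u * 2 ^ (b+1) + α + l' - 1) := by
    ext n
    simp only [Set.mem_Icc, Set.mem_union, hS]
    omega
  have hres := CW.union (d := d) (L := L) (S := S)
    (hA.mono (by rw [hS]; intro n hn; simp only [Set.mem_Icc] at *; omega))
    (hB.mono (by rw [hS]; intro n hn; simp only [Set.mem_Icc] at *; omega))
    (a := u * 2 ^ (b+1) + (v + Ob d b)) (b := u * 2 ^ (b+1) + 2 ^ b + v)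
    (by simp only [Set.mem_Icc]; omega)
    (by simp only [Set.mem_Icc]; omega)
    (by rw [hS]; simp only [Set.mem_Icc]; omega)
    (by rw [hS]; simp only [Set.mem_Icc]; omega)
    hedge
  rw [← hunion] at hres
  exact hres

end MortonAux
namespace MortonAux

lemma d1_coord (L Q : ℕ) (hQ : Q < 2 ^ L) : mortonCoord 1 L 1 Q = Q := by
  rw [mortonCoord_eq]
  have h1 : ∀ ℓ ∈ Finset.range L, dig Q (ℓ * 1 + (1 - 1)) * 2 ^ ℓ = dig Q ℓ * 2 ^ ℓ := by
    intro ℓ _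
    congr 2
    omega
  rw [Finset.sum_congr rfl h1, sum_dig_of_lt hQ]

lemma d1_nbr (L Q : ℕ) (h : Q + 1 < 2 ^ L) : MortonFaceNbr 1 L Q (Q + 1) := by
  refine ⟨by omega, 1, le_refl 1, le_refl 1, ?_, ?_⟩
  · rw [d1_coord L Q (by omega), d1_coord L (Q+1) h]
    have : ((Q:ℤ) - ((Q + 1 : ℕ) : ℤ)) = -1 := by push_cast; ring
    rw [this]
    rfl
  · intro s h1 h2 h3
    omega

lemma d1_conn (L a l : ℕ) (hl : 1 ≤ l) (hfit : a + l ≤ 2 ^ L) :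
    MortonFaceConnected 1 L (Set.Icc a (a + l - 1)) := by
  set S := Set.Icc a (a + l - 1) with hS
  set r := fun x y => x ∈ S ∧ y ∈ S ∧ MortonFaceNbr 1 L x y with hr
  have hsym : Symmetric r := fun x y h => ⟨h.2.1, h.1, nbr_symm h.2.2⟩
  have chain : ∀ k, a + k ≤ a + l - 1 → Relation.ReflTransGen r a (a + k) := by
    intro k
    induction k with
    | zero => intro _; exact Relation.ReflTransGen.refl
    | succ k ih =>
      intro hk
      refine Relation.ReflTransGen.tail (ih (by omega)) ?_
      refine ⟨?_, ?_, d1_nbr L (a + k) (by omega)⟩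
      · rw [hS]; simp only [Set.mem_Icc]; omega
      · rw [hS]; simp only [Set.mem_Icc]; omega
  intro x hx y hy
  simp only [hS, Set.mem_Icc] at hx hy
  have hx2 : x = a + (x - a) := by omega
  have hy2 : y = a + (y - a) := by omega
  have c1 : Relation.ReflTransGen r a x := by rw [hx2]; exact chain _ (by omega)
  have c2 : Relation.ReflTransGen r a y := by rw [hy2]; exact chain _ (by omega)
  exact Relation.ReflTransGen.trans (haveI : Std.Symm r := ⟨hsym⟩; Std.Symm.symm _ _ c1) c2

lemma singleton_conn (d L a : ℕ) : MortonFaceConnected d L (Set.Icc a a) := by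
  intro x hx y hy
  simp only [Set.mem_Icc] at hx hy
  have : x = y := by omega
  subst this
  exact Relation.ReflTransGen.refl

lemma ncard_ge {G : Set ℕ} (F : Finset ℕ) (hsub : ∀ a ∈ F, a ∈ G) (hfin : G.Finite) :
    F.card ≤ G.ncard := by
  have h1 : (F : Set ℕ) ⊆ G := hsub
  calc F.card = (F : Set ℕ).ncard := (Set.ncard_coe_finset F).symm
    _ ≤ G.ncard := Set.ncard_le_ncard h1 hfin

lemma final_cast (d L l cnt : ℕ) (hd : 1 ≤ d) (hl : l ≤ 2 ^ (d * L))
    (h : 2 ^ (d * L) - l + 1 ≤ (2 ^ d - 1) * cnt) :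
    ((2:ℚ) ^ (d * L) - l + 1) / ((2:ℚ) ^ d - 1) ≤ (cnt : ℚ) := by
  have h2 : (1:ℕ) < 2 ^ d := by
    calc (1:ℕ) < 2 ^ 1 := by norm_num
      _ ≤ 2 ^ d := Nat.pow_le_pow_right (by norm_num) hd
  have hpos : (0:ℚ) < (2:ℚ) ^ d - 1 := by
    have h3 : (2:ℚ) ^ 1 ≤ (2:ℚ) ^ d := by
      apply pow_le_pow_right₀ (by norm_num) hd
    have : (2:ℚ) ≤ (2:ℚ) ^ d := by simpa using h3
    linarith
  rw [div_le_iff₀ hpos]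
  have hcast : ((2 ^ (d * L) - l + 1 : ℕ) : ℚ) = (2:ℚ) ^ (d * L) - l + 1 := by
    have : ((2 ^ (d * L) - l : ℕ) : ℚ) = ((2:ℚ) ^ (d * L)) - (l:ℚ) := by
      rw [Nat.cast_sub hl]
      push_cast
      ring
    push_cast [this]
    ring
  have hcast2 : (((2 ^ d - 1) * cnt : ℕ) : ℚ) = ((2:ℚ) ^ d - 1) * cnt := by
    rw [Nat.cast_mul, Nat.cast_sub (by omega : 1 ≤ 2 ^ d)]
    push_cast
    ring
  calc (2:ℚ) ^ (d * L) - l + 1 = ((2 ^ (d * L) - l + 1 : ℕ) : ℚ) := hcast.symm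
    _ ≤ (((2 ^ d - 1) * cnt : ℕ) : ℚ) := by exact_mod_cast h
    _ = ((2:ℚ) ^ d - 1) * cnt := hcast2
    _ = cnt * ((2:ℚ) ^ d - 1) := by ring

end MortonAux

open MortonAux

/-- The number of face-connected (continuous) segments of length `l` of the level-`L`
`d`-dimensional Morton curve is at least `(2^{dL} - l + 1) / (2^d - 1)`,
i.e. at least the fraction `1/(2^d - 1)` of all `2^{dL} - l + 1` segments of length `l`. -/
theorem morton_fraction_continuous_segments (d L l : ℕ) (hd : 1 ≤ d)
    (hl1 : 1 ≤ l) (hl2 : l ≤ 2 ^ (d * L)) :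
    ((2 : ℚ) ^ (d * L) - l + 1) / ((2 : ℚ) ^ d - 1) ≤
      ({a : ℕ | a + l ≤ 2 ^ (d * L) ∧
        MortonFaceConnected d L (Set.Icc a (a + l - 1))}.ncard : ℚ) := by
  classical
  set G : Set ℕ := {a : ℕ | a + l ≤ 2 ^ (d * L) ∧
    MortonFaceConnected d L (Set.Icc a (a + l - 1))} with hG
  have hGfin : G.Finite := by
    apply Set.Finite.subset (Set.finite_Iic (2 ^ (d * L)))
    intro a ha
    simp only [hG, Set.mem_setOf_eq] at ha
    simp only [Set.mem_Iic]
    omega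
  have key : ∀ F : Finset ℕ, (∀ a ∈ F, a ∈ G) →
      2 ^ (d * L) - l + 1 ≤ (2 ^ d - 1) * F.card →
      ((2 : ℚ) ^ (d * L) - l + 1) / ((2 : ℚ) ^ d - 1) ≤ (G.ncard : ℚ) := by
    intro F hsub hineq
    have h1 := ncard_ge F hsub hGfin
    have h2 : 2 ^ (d * L) - l + 1 ≤ (2 ^ d - 1) * G.ncard := by
      have h3 := Nat.mul_le_mul_left (2 ^ d - 1) h1
      omega
    exact final_cast d L l G.ncard hd hl2 h2
  by_cases hd1 : d = 1
  · -- dimension 1 : every segment is connected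
    subst hd1
    refine key (Finset.range (2 ^ (1 * L) - l + 1)) ?_ ?_
    · intro a ha
      simp only [Finset.mem_range] at ha
      have hLL : (2:ℕ) ^ (1 * L) = 2 ^ L := by rw [one_mul]
      refine ⟨by omega, ?_⟩
      exact d1_conn L a l hl1 (by omega)
    · rw [Finset.card_range]
      have h4 : (2:ℕ) ^ 1 - 1 = 1 := by norm_num
      rw [h4, one_mul]
      omega
  -- now d ≥ 2
  have hd2 : 2 ≤ d := by omega
  have h2d : (4:ℕ) ≤ 2 ^ d := by
    calc (4:ℕ) = 2 ^ 2 := by norm_num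
      _ ≤ 2 ^ d := Nat.pow_le_pow_right (by norm_num) hd2
  by_cases hone : l = 1
  · subst hone
    refine key (Finset.range (2 ^ (d * L))) ?_ ?_
    · intro a ha
      simp only [Finset.mem_range] at ha
      refine ⟨by omega, ?_⟩
      have h5 : a + 1 - 1 = a := by omega
      rw [h5]
      exact singleton_conn d L a
    · rw [Finset.card_range]
      have h6 : 1 ≤ 2 ^ d - 1 := by omega
      calc 2 ^ (d * L) - 1 + 1 ≤ 2 ^ (d * L) := by omega
        _ = 1 * 2 ^ (d * L) := by ring
        _ ≤ (2 ^ d - 1) * 2 ^ (d * L) := Nat.mul_le_mul_right _ h6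
  -- now l ≥ 2
  have hl2' : 2 ≤ l := by omega
  set β := Nat.log 2 (l - 1) with hβdef
  have hβ1 : 2 ^ β ≤ l - 1 := Nat.pow_log_le_self 2 (by omega)
  have hβ2 : l - 1 < 2 ^ (β + 1) := Nat.lt_pow_succ_log_self (by norm_num) (l - 1)
  have hβl : 2 ^ β < l := by omega
  have hlM : l ≤ 2 ^ (β + 1) := by omega
  have hpowβ : (2:ℕ) ^ (β + 1) = 2 ^ β + 2 ^ β := by ring
  have hβdL : β + 1 ≤ d * L := by
    by_contra hcon
    push_neg at hcon
    have h7 : (2:ℕ) ^ (d * L) ≤ 2 ^ β := Nat.pow_le_pow_right (by norm_num) (by omega)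
    omega
  have hKM : 2 ^ (d * L - (β + 1)) * 2 ^ (β + 1) = 2 ^ (d * L) := by
    rw [← pow_add]
    congr 1
    omega
  have hR1 : 1 ≤ 2 ^ (β + 1) - l + 1 := by omega
  -- family F1 : segments inside an aligned 2^(β+1)-block
  set K := 2 ^ (d * L - (β + 1)) with hKdef
  set R := 2 ^ (β + 1) - l + 1 with hRdef
  set F1 := (Finset.range K ×ˢ Finset.range R).image
    (fun p : ℕ × ℕ => p.1 * 2 ^ (β + 1) + p.2) with hF1def
  have hMpos : 0 < 2 ^ (β + 1) := Nat.pow_pos (by norm_num)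
  have hF1card : F1.card = K * R := by
    rw [hF1def, Finset.card_image_of_injOn, Finset.card_product, Finset.card_range,
      Finset.card_range]
    intro p hp q hq hpq
    simp only [Finset.mem_coe, Finset.mem_product, Finset.mem_range] at hp hq
    simp only at hpq
    have hp2 : p.2 < 2 ^ (β + 1) := by omega
    have hq2 : q.2 < 2 ^ (β + 1) := by omega
    have h1 : (p.1 * 2 ^ (β + 1) + p.2) % 2 ^ (β + 1)
        = (q.1 * 2 ^ (β + 1) + q.2) % 2 ^ (β + 1) := by rw [hpq]
    rw [Nat.mul_add_mod_of_lt hp2, Nat.mul_add_mod_of_lt hq2] at h1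
    have h2 : p.1 * 2 ^ (β + 1) = q.1 * 2 ^ (β + 1) := by omega
    have h3 : p.1 = q.1 := Nat.eq_of_mul_eq_mul_right hMpos h2
    exact Prod.ext h3 h1
  have hF1sub : ∀ a ∈ F1, a ∈ G := by
    intro a ha
    rw [hF1def] at ha
    obtain ⟨p, hp, rfl⟩ := Finset.mem_image.mp ha
    simp only [Finset.mem_product, Finset.mem_range] at hp
    obtain ⟨hu, hρ⟩ := hp
    have hfit : p.1 * 2 ^ (β + 1) + p.2 + l ≤ 2 ^ (d * L) := by
      have e1 : (p.1 + 1) * 2 ^ (β + 1) ≤ K * 2 ^ (β + 1) :=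
        Nat.mul_le_mul_right _ (by omega)
      have e2 : (p.1 + 1) * 2 ^ (β + 1) = p.1 * 2 ^ (β + 1) + 2 ^ (β + 1) := by ring
      have e3 : K * 2 ^ (β + 1) = 2 ^ (d * L) := hKM
      omega
    refine ⟨hfit, ?_⟩
    have hvle := vA_le d β p.2
    have hcc := cross_conn (d := d) (L := L) β p.1 p.2 l (vA d β p.2) hd (by omega)
      (by omega) (by omega) (by omega)
      (fun p' hp' => by rw [dig_vA, if_neg (by simp [hp'])])
      (vA_lt d β p.2)
      (le_vA_add_Ob d β p.2 (by omega))
      (by omega)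
    exact hcc
  -- the Ob-identity facts
  have hid := Ob_identity d (β + 1) (by omega)
  have hσd : (β + 1) % d < d := Nat.mod_lt _ (by omega)
  have hσ1 : (2:ℕ) ^ ((β + 1) % d) ≤ 2 ^ (d - 1) :=
    Nat.pow_le_pow_right (by norm_num) (by omega)
  have hσpos : (1:ℕ) ≤ 2 ^ ((β + 1) % d) := Nat.one_le_two_pow
  have hdd : (2:ℕ) ^ d = 2 ^ (d - 1) * 2 := by
    rw [← pow_succ]
    congr 1
    omega
  have hσβ : (β + 1) % d ≤ β + 1 := Nat.mod_le _ _
  have hσβ2 : (2:ℕ) ^ ((β + 1) % d) ≤ 2 ^ (β + 1) :=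
    Nat.pow_le_pow_right (by norm_num) hσβ
  have hOlt := Ob_lt d (β + 1)
  have h3 : 2 ^ (β + 1) ≤ (2 ^ d - 1) * (Ob d (β + 1) + 1) := by
    have e2 : (2 ^ d - 1) * (Ob d (β + 1) + 1) = (2 ^ d - 1) * Ob d (β + 1) + (2 ^ d - 1) := by
      ring
    omega
  by_cases hW0 : l + Ob d (β + 1) ≤ 2 ^ (β + 1)
  · -- no F2 needed
    refine key F1 hF1sub ?_
    rw [hF1card]
    have h4 : Ob d (β + 1) + 1 ≤ R := by omega
    calc 2 ^ (d * L) - l + 1 ≤ 2 ^ (d * L) := by omega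
      _ = K * 2 ^ (β + 1) := hKM.symm
      _ ≤ K * ((2 ^ d - 1) * (Ob d (β + 1) + 1)) := Nat.mul_le_mul_left _ h3
      _ ≤ K * ((2 ^ d - 1) * R) := Nat.mul_le_mul_left _ (Nat.mul_le_mul_left _ h4)
      _ = (2 ^ d - 1) * (K * R) := by ring
  by_cases htop : β + 2 > d * L
  · -- β + 1 = d * L : F1 alone is all segments crossing the middle
    have hβtop : β + 1 = d * L := by omega
    refine key F1 hF1sub ?_
    rw [hF1card]
    have hK1 : K = 1 := by
      rw [hKdef]
      have : d * L - (β + 1) = 0 := by omega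
      rw [this, pow_zero]
    rw [hK1, one_mul]
    have h6 : 1 ≤ 2 ^ d - 1 := by omega
    calc 2 ^ (d * L) - l + 1 = R := by rw [hRdef, hβtop]
      _ = 1 * R := by ring
      _ ≤ (2 ^ d - 1) * R := Nat.mul_le_mul_right _ h6
  -- main case : both families
  push_neg at hW0 htop
  have hβ2dL : β + 2 ≤ d * L := by omega
  set O' := Ob d (β + 1) with hO'def
  set C' := Cb d (β + 1) with hC'def
  set W := l + O' - 2 ^ (β + 1) with hWdef
  have hW1 : 1 ≤ W := by omega
  have hOC : O' + C' = 2 ^ (β + 1) - 1 := Ob_add_Cb d (β + 1)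
  have h2O : 2 * O' ≤ C' := by
    have e1 : 3 ≤ 2 ^ d - 1 := by omega
    have e2 : 3 * O' ≤ (2 ^ d - 1) * O' := Nat.mul_le_mul_right _ e1
    omega
  have hWO : W ≤ O' := by omega
  have hWl : W ≤ l - 1 := by omega
  set K2 := 2 ^ (d * L - (β + 2)) with hK2def
  have hKK2 : K = K2 * 2 := by
    rw [hKdef, hK2def, ← pow_succ]
    congr 1
    omega
  have hK2M : K2 * 2 ^ (β + 2) = 2 ^ (d * L) := by
    rw [hK2def, ← pow_add]
    congr 1
    omega
  have hpow2 : (2:ℕ) ^ (β + 2) = 2 ^ (β + 1) + 2 ^ (β + 1) := by ring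
  set tfun : ℕ → ℕ := fun j => if j < W then 2 ^ (β + 1) - 1 - j else O' - (j - W)
    with htfundef
  have htlt : ∀ j, tfun j < 2 ^ (β + 1) := by
    intro j
    simp only [htfundef]
    split <;> omega
  have htge : ∀ j < 2 * W, 2 ^ (β + 1) + 1 ≤ tfun j + l := by
    intro j hj
    simp only [htfundef]
    split <;> omega
  have htinj : ∀ j < 2 * W, ∀ j' < 2 * W, tfun j = tfun j' → j = j' := by
    intro j hj j' hj' he
    simp only [htfundef] at he
    split at he <;> split at he <;> omega
  set F2 := (Finset.range K2 ×ˢ Finset.range (2 * W)).image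
    (fun p : ℕ × ℕ => p.1 * 2 ^ (β + 1 + 1) + tfun p.2) with hF2def
  have hM2pos : 0 < 2 ^ (β + 1 + 1) := Nat.pow_pos (by norm_num)
  have hpoweq : (2:ℕ) ^ (β + 1 + 1) = 2 ^ (β + 2) := by norm_num
  have hF2card : F2.card = K2 * (2 * W) := by
    rw [hF2def, Finset.card_image_of_injOn, Finset.card_product, Finset.card_range,
      Finset.card_range]
    intro p hp q hq hpq
    simp only [Finset.mem_coe, Finset.mem_product, Finset.mem_range] at hp hq
    simp only at hpq
    have hp2 : tfun p.2 < 2 ^ (β + 1 + 1) := by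
      have := htlt p.2
      have e : (2:ℕ) ^ (β + 1 + 1) = 2 ^ (β + 1) + 2 ^ (β + 1) := by ring
      omega
    have hq2 : tfun q.2 < 2 ^ (β + 1 + 1) := by
      have := htlt q.2
      have e : (2:ℕ) ^ (β + 1 + 1) = 2 ^ (β + 1) + 2 ^ (β + 1) := by ring
      omega
    have h1 : (p.1 * 2 ^ (β + 1 + 1) + tfun p.2) % 2 ^ (β + 1 + 1)
        = (q.1 * 2 ^ (β + 1 + 1) + tfun q.2) % 2 ^ (β + 1 + 1) := by rw [hpq]
    rw [Nat.mul_add_mod_of_lt hp2, Nat.mul_add_mod_of_lt hq2] at h1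
    have h2 : p.1 * 2 ^ (β + 1 + 1) = q.1 * 2 ^ (β + 1 + 1) := by omega
    have h3 : p.1 = q.1 := Nat.eq_of_mul_eq_mul_right hM2pos h2
    exact Prod.ext h3 (htinj _ hp.2 _ hq.2 h1)
  have hF2sub : ∀ a ∈ F2, a ∈ G := by
    intro a ha
    rw [hF2def] at ha
    obtain ⟨p, hp, rfl⟩ := Finset.mem_image.mp ha
    simp only [Finset.mem_product, Finset.mem_range] at hp
    obtain ⟨hu, hj⟩ := hp
    have htltj := htlt p.2
    have htgej := htge p.2 hj
    have hfit : p.1 * 2 ^ (β + 1 + 1) + tfun p.2 + l ≤ 2 ^ (d * L) := by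
      have e1 : (p.1 + 1) * 2 ^ (β + 1 + 1) ≤ K2 * 2 ^ (β + 1 + 1) :=
        Nat.mul_le_mul_right _ (by omega)
      have e2 : (p.1 + 1) * 2 ^ (β + 1 + 1) = p.1 * 2 ^ (β + 1 + 1) + 2 ^ (β + 1 + 1) := by
        ring
      have e3 : K2 * 2 ^ (β + 1 + 1) = 2 ^ (d * L) := by rw [hpoweq]; exact hK2M
      have e4 : (2:ℕ) ^ (β + 1 + 1) = 2 ^ (β + 1) + 2 ^ (β + 1) := by ring
      omega
    refine ⟨hfit, ?_⟩
    have e4 : (2:ℕ) ^ ((β + 1) + 1) = 2 ^ (β + 1) + 2 ^ (β + 1) := by ring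
    rcases lt_or_ge p.2 W with hjW | hjW
    · -- witness C'
      have htj : tfun p.2 = 2 ^ (β + 1) - 1 - p.2 := by simp only [htfundef]; rw [if_pos hjW]
      have hcc := cross_conn (d := d) (L := L) (β + 1) p.1 (tfun p.2) l C' hd (by omega)
        (htlt p.2) (by omega) (by omega)
        (fun p' hp' => by rw [hC'def, dig_Cb, if_neg (by simp [hp'])])
        (by rw [hC'def]; exact Cb_lt d (β + 1))
        (by omega)
        (by rw [htj]; omega)
      exact hcc
    · -- witness 0
      have htj : tfun p.2 = O' - (p.2 - W) := by
        simp only [htfundef]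
        rw [if_neg (by omega)]
      have hcc := cross_conn (d := d) (L := L) (β + 1) p.1 (tfun p.2) l 0 hd (by omega)
        (htlt p.2) (by omega) (by omega)
        (fun p' _ => dig_zero p')
        (by omega)
        (by rw [htj]; omega)
        (by omega)
      exact hcc
  have hdisj : Disjoint F1 F2 := by
    rw [Finset.disjoint_left]
    intro a ha1 ha2
    rw [hF1def] at ha1
    rw [hF2def] at ha2
    obtain ⟨p, hp, he1⟩ := Finset.mem_image.mp ha1
    obtain ⟨q, hq, he2⟩ := Finset.mem_image.mp ha2
    simp only [Finset.mem_product, Finset.mem_range] at hp hq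
    have hm1 : a % 2 ^ (β + 1) = p.2 := by
      rw [← he1, Nat.mul_add_mod_of_lt (by omega)]
    have hm2 : a % 2 ^ (β + 1) = tfun q.2 := by
      rw [← he2]
      have e : q.1 * 2 ^ (β + 1 + 1) = (q.1 * 2) * 2 ^ (β + 1) := by ring
      rw [e, Nat.mul_add_mod_of_lt (htlt q.2)]
    have hge : 2 ^ (β + 1) + 1 ≤ tfun q.2 + l := htge q.2 hq.2
    omega
  refine key (F1 ∪ F2) (by
    intro a ha
    rcases Finset.mem_union.mp ha with h | h
    · exact hF1sub a h
    · exact hF2sub a h) ?_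
  rw [Finset.card_union_of_disjoint hdisj, hF1card, hF2card]
  have hRW : R + W = O' + 1 := by omega
  have hcnt : K * R + K2 * (2 * W) = 2 * K2 * (R + W) := by
    rw [hKK2]
    ring
  rw [hcnt, hRW]
  calc 2 ^ (d * L) - l + 1 ≤ 2 ^ (d * L) := by omega
    _ = K2 * 2 ^ (β + 2) := hK2M.symm
    _ = 2 * K2 * 2 ^ (β + 1) := by rw [hpow2]; ring
    _ ≤ 2 * K2 * ((2 ^ d - 1) * (O' + 1)) := Nat.mul_le_mul_left _ h3
    _ = (2 ^ d - 1) * (2 * K2 * (O' + 1)) := by ring
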